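/- Leakage continuity under state-sequence perturbation: let s₁, s₂ ∈ S^n with Hamming distance d_H(s₁,s₂) ≤ nα, and let (M, X^n) be jointly distributed (independently of the state) and Z^n be produced from X^n through the memoryless state-dependent channel Π_i V_{s_i}(z_i|x_i). Then |I(M; Z^n | S^n = s₁) − I(M; Z^n | S^n = s₂)| ≤ nα log|Z|. -/

import Mathlib

open scoped Classical
set_option linter.unusedSectionVars false
set_option maxHeartbeats 1000000

/-- Probability that a function of the sample takes a given value. -/
noncomputable def pOf {Ω A : Type*} [Fintype Ω] (P : Ω → ℝ) (f : Ω → A) (a : A) : ℝ :=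
  ∑ ω ∈ Finset.univ.filter (fun ω => f ω = a), P ω

/-- Shannon entropy (base 2) of a random variable `f` under pmf `P`. -/
noncomputable def ent {Ω A : Type*} [Fintype Ω] [Fintype A] (P : Ω → ℝ) (f : Ω → A) : ℝ :=
  - ∑ a, pOf P f a * Real.logb 2 (pOf P f a)

/-- Mutual information `I(f;g)` under pmf `P`. -/
noncomputable def mi {Ω A B : Type*} [Fintype Ω] [Fintype A] [Fintype B]
    (P : Ω → ℝ) (f : Ω → A) (g : Ω → B) : ℝ :=
  ent P f + ent P g - ent P (fun ω => (f ω, g ω))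

section General
variable {Ω A B C : Type*} [Fintype Ω] [Fintype A] [Fintype B] [Fintype C]

lemma pOf_nonneg (P : Ω → ℝ) (h0 : ∀ ω, 0 ≤ P ω) (f : Ω → A) (a : A) : 0 ≤ pOf P f a :=
  Finset.sum_nonneg fun ω _ => h0 ω

lemma le_pOf (P : Ω → ℝ) (h0 : ∀ ω, 0 ≤ P ω) (f : Ω → A) (ω : Ω) : P ω ≤ pOf P f (f ω) :=
  Finset.single_le_sum (f := fun ω => P ω) (fun ω _ => h0 ω) (by simp)

lemma sum_pOf (P : Ω → ℝ) (f : Ω → A) : ∑ a, pOf P f a = ∑ ω, P ω := by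
  unfold pOf
  exact Finset.sum_fiberwise Finset.univ f (fun ω => P ω)

lemma pOf_expect (P : Ω → ℝ) (f : Ω → A) (φ : A → ℝ) :
    ∑ a, pOf P f a * φ a = ∑ ω, P ω * φ (f ω) := by
  unfold pOf
  simp_rw [Finset.sum_filter, Finset.sum_mul, ite_mul, zero_mul]
  rw [Finset.sum_comm]
  refine Finset.sum_congr rfl fun ω _ => ?_
  simp

lemma pOf_pair_le_fst (P : Ω → ℝ) (h0 : ∀ ω, 0 ≤ P ω) (f : Ω → A) (g : Ω → B) (a : A) (b : B) :
    pOf P (fun ω => (f ω, g ω)) (a, b) ≤ pOf P f a := by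
  apply Finset.sum_le_sum_of_subset_of_nonneg
  · intro ω hω
    simp only [Finset.mem_filter, Finset.mem_univ, true_and, Prod.mk.injEq] at hω ⊢
    exact hω.1
  · exact fun ω _ _ => h0 ω

lemma pOf_pair_le_snd (P : Ω → ℝ) (h0 : ∀ ω, 0 ≤ P ω) (f : Ω → A) (g : Ω → B) (a : A) (b : B) :
    pOf P (fun ω => (f ω, g ω)) (a, b) ≤ pOf P g b := by
  apply Finset.sum_le_sum_of_subset_of_nonneg
  · intro ω hω
    simp only [Finset.mem_filter, Finset.mem_univ, true_and, Prod.mk.injEq] at hω ⊢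
    exact hω.2
  · exact fun ω _ _ => h0 ω

lemma pOf_pair_marg_fst (P : Ω → ℝ) (f : Ω → A) (g : Ω → B) (a : A) :
    ∑ b, pOf P (fun ω => (f ω, g ω)) (a, b) = pOf P f a := by
  unfold pOf
  simp_rw [Finset.sum_filter, Prod.mk.injEq]
  rw [Finset.sum_comm]
  refine Finset.sum_congr rfl fun ω _ => ?_
  rcases eq_or_ne (f ω) a with h | h <;> simp [h]

lemma pOf_pair_marg_snd (P : Ω → ℝ) (f : Ω → A) (g : Ω → B) (b : B) :
    ∑ a, pOf P (fun ω => (f ω, g ω)) (a, b) = pOf P g b := by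
  unfold pOf
  simp_rw [Finset.sum_filter, Prod.mk.injEq]
  rw [Finset.sum_comm]
  refine Finset.sum_congr rfl fun ω _ => ?_
  rcases eq_or_ne (g ω) b with h | h <;> simp [h]

lemma ent_eq (P : Ω → ℝ) (f : Ω → A) :
    ent P f = - ∑ ω, P ω * Real.logb 2 (pOf P f (f ω)) := by
  rw [ent, pOf_expect]

lemma ent_congr {Ω' : Type*} [Fintype Ω'] (P : Ω → ℝ) (Q : Ω' → ℝ) (f : Ω → A) (g : Ω' → A)
    (h : ∀ a, pOf P f a = pOf Q g a) : ent P f = ent Q g := by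
  unfold ent
  congr 1
  exact Finset.sum_congr rfl fun a _ => by rw [h]

lemma gibbs (P : Ω → ℝ) (h0 : ∀ ω, 0 ≤ P ω) (h1 : ∑ ω, P ω = 1) (r t : Ω → ℝ)
    (hr : ∀ ω, P ω ≠ 0 → 0 < r ω) (ht : ∀ ω, P ω ≠ 0 → 0 < t ω)
    (hs : ∑ ω, P ω * (r ω / t ω) ≤ 1) :
    ∑ ω, P ω * Real.log (r ω) ≤ ∑ ω, P ω * Real.log (t ω) := by
  have key : ∀ ω, P ω * Real.log (r ω) - P ω * Real.log (t ω) ≤ P ω * (r ω / t ω) - P ω := by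
    intro ω
    rcases eq_or_ne (P ω) 0 with h | h
    · simp [h]
    · have hp : 0 < P ω := (h0 ω).lt_of_ne (Ne.symm h)
      have hrp := hr ω h; have htp := ht ω h
      have hlog : Real.log (r ω) - Real.log (t ω) ≤ r ω / t ω - 1 := by
        have h2 := Real.log_le_sub_one_of_pos (div_pos hrp htp)
        rwa [Real.log_div hrp.ne' htp.ne'] at h2
      nlinarith
  have hsum := Finset.sum_le_sum (fun ω (_ : ω ∈ Finset.univ) => key ω)
  rw [Finset.sum_sub_distrib, Finset.sum_sub_distrib, h1] at hsum
  linarith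

lemma sum_mul_logb (P : Ω → ℝ) (u : Ω → ℝ) :
    ∑ ω, P ω * Real.logb 2 (u ω) = (∑ ω, P ω * Real.log (u ω)) / Real.log 2 := by
  rw [Finset.sum_div]
  refine Finset.sum_congr rfl fun ω _ => ?_
  rw [Real.logb, mul_div_assoc]

lemma ent_comp_le (P : Ω → ℝ) (h0 : ∀ ω, 0 ≤ P ω) (f : Ω → A) (φ : A → B) :
    ent P (fun ω => φ (f ω)) ≤ ent P f := by
  rw [ent_eq, ent_eq, neg_le_neg_iff]
  refine Finset.sum_le_sum fun ω _ => ?_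
  rcases eq_or_ne (P ω) 0 with h | h
  · simp [h]
  · have hp : 0 < P ω := (h0 ω).lt_of_ne (Ne.symm h)
    refine mul_le_mul_of_nonneg_left ?_ hp.le
    refine Real.logb_le_logb_of_le one_lt_two (hp.trans_le (le_pOf P h0 f ω)) ?_
    apply Finset.sum_le_sum_of_subset_of_nonneg
    · intro ω' hω'
      simp only [Finset.mem_filter, Finset.mem_univ, true_and] at hω' ⊢
      rw [hω']
    · exact fun ω _ _ => h0 ω

lemma ent_comp_equiv (P : Ω → ℝ) (h0 : ∀ ω, 0 ≤ P ω) (f : Ω → A) (e : A ≃ B) :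
    ent P (fun ω => e (f ω)) = ent P f := by
  refine le_antisymm (ent_comp_le P h0 f e) ?_
  have h2 := ent_comp_le P h0 (fun ω => e (f ω)) e.symm
  simpa using h2

lemma ent_le_logb_card (P : Ω → ℝ) (h0 : ∀ ω, 0 ≤ P ω) (h1 : ∑ ω, P ω = 1) (f : Ω → A) :
    ent P f ≤ Real.logb 2 (Fintype.card A) := by
  have hA : Nonempty A := by
    by_contra hA
    rw [not_nonempty_iff] at hA
    have : IsEmpty Ω := ⟨fun ω => (IsEmpty.false (f ω))⟩
    rw [Finset.univ_eq_empty, Finset.sum_empty] at h1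
    norm_num at h1
  have hcard : (0 : ℝ) < Fintype.card A := by
    have := Fintype.card_pos_iff.mpr hA
    positivity
  have hg := gibbs P h0 h1 (fun _ => ((Fintype.card A : ℝ))⁻¹) (fun ω => pOf P f (f ω))
    (fun ω _ => by positivity)
    (fun ω h => (h0 ω).lt_of_ne (Ne.symm h) |>.trans_le (le_pOf P h0 f ω))
    ?_
  · have e1 : ∑ ω, P ω * Real.log ((Fintype.card A : ℝ))⁻¹
        = - Real.log (Fintype.card A) := by
      rw [← Finset.sum_mul, h1, one_mul, Real.log_inv]
    rw [e1] at hg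
    rw [ent_eq, sum_mul_logb, Real.logb, ← neg_div]
    exact (div_le_div_iff_of_pos_right (Real.log_pos one_lt_two)).mpr (by linarith)
  · have : ∑ ω, P ω * (((Fintype.card A : ℝ))⁻¹ / pOf P f (f ω))
        = ∑ a, pOf P f a * (((Fintype.card A : ℝ))⁻¹ / pOf P f a) := by
      rw [pOf_expect]
    rw [this]
    have hb : ∀ a, pOf P f a * (((Fintype.card A : ℝ))⁻¹ / pOf P f a)
        ≤ ((Fintype.card A : ℝ))⁻¹ := by
      intro a
      rcases eq_or_ne (pOf P f a) 0 with h | h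
      · rw [h, zero_mul]; positivity
      · rw [mul_div_assoc']
        rw [mul_comm, mul_div_assoc, div_self h, mul_one]
    calc ∑ a, pOf P f a * (((Fintype.card A : ℝ))⁻¹ / pOf P f a)
        ≤ ∑ a : A, ((Fintype.card A : ℝ))⁻¹ := Finset.sum_le_sum fun a _ => hb a
      _ = 1 := by
          rw [Finset.sum_const, Finset.card_univ, nsmul_eq_mul]
          field_simp


lemma ent_eq_log (P : Ω → ℝ) (f : Ω → A) :
    ent P f = -(∑ ω, P ω * Real.log (pOf P f (f ω))) / Real.log 2 := by
  rw [ent_eq, sum_mul_logb, neg_div]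

lemma sum_log_pOf (P : Ω → ℝ) (f : Ω → A) :
    ∑ ω, P ω * Real.log (pOf P f (f ω)) = ∑ a, pOf P f a * Real.log (pOf P f a) :=
  (pOf_expect P f (fun a => Real.log (pOf P f a))).symm

lemma ent_pair_le (P : Ω → ℝ) (h0 : ∀ ω, 0 ≤ P ω) (h1 : ∑ ω, P ω = 1)
    (f : Ω → A) (g : Ω → B) :
    ent P (fun ω => (f ω, g ω)) ≤ ent P f + ent P g := by
  have hpos : ∀ ω, P ω ≠ 0 → 0 < P ω := fun ω h => (h0 ω).lt_of_ne (Ne.symm h)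
  have hg := gibbs P h0 h1 (fun ω => pOf P f (f ω) * pOf P g (g ω))
    (fun ω => pOf P (fun ω => (f ω, g ω)) (f ω, g ω))
    (fun ω h => mul_pos ((hpos ω h).trans_le (le_pOf P h0 f ω))
      ((hpos ω h).trans_le (le_pOf P h0 g ω)))
    (fun ω h => (hpos ω h).trans_le (le_pOf P h0 (fun ω => (f ω, g ω)) ω))
    ?_
  · have hsplit : ∑ ω, P ω * Real.log (pOf P f (f ω) * pOf P g (g ω))
        = ∑ ω, P ω * Real.log (pOf P f (f ω)) + ∑ ω, P ω * Real.log (pOf P g (g ω)) := by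
      rw [← Finset.sum_add_distrib]
      refine Finset.sum_congr rfl fun ω _ => ?_
      rcases eq_or_ne (P ω) 0 with h | h
      · simp [h]
      · rw [Real.log_mul ((hpos ω h).trans_le (le_pOf P h0 f ω)).ne'
          ((hpos ω h).trans_le (le_pOf P h0 g ω)).ne', mul_add]
    rw [hsplit] at hg
    rw [ent_eq_log, ent_eq_log, ent_eq_log, ← add_div, ← neg_add]
    exact (div_le_div_iff_of_pos_right (Real.log_pos one_lt_two)).mpr (neg_le_neg hg)
  · have he : ∑ ω, P ω * (pOf P f (f ω) * pOf P g (g ω) / pOf P (fun ω => (f ω, g ω)) (f ω, g ω))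
        = ∑ c : A × B, pOf P (fun ω => (f ω, g ω)) c *
            (pOf P f c.1 * pOf P g c.2 / pOf P (fun ω => (f ω, g ω)) c) := by
      rw [pOf_expect P (fun ω => (f ω, g ω))
        (fun c => pOf P f c.1 * pOf P g c.2 / pOf P (fun ω => (f ω, g ω)) c)]
    rw [he]
    have hb : ∀ c : A × B, pOf P (fun ω => (f ω, g ω)) c *
        (pOf P f c.1 * pOf P g c.2 / pOf P (fun ω => (f ω, g ω)) c)
        ≤ pOf P f c.1 * pOf P g c.2 := by
      intro c
      rcases eq_or_ne (pOf P (fun ω => (f ω, g ω)) c) 0 with h | h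
      · rw [h, zero_mul]
        exact mul_nonneg (pOf_nonneg P h0 f _) (pOf_nonneg P h0 g _)
      · rw [mul_comm, div_mul_cancel₀ _ h]
    calc _ ≤ ∑ c : A × B, pOf P f c.1 * pOf P g c.2 := Finset.sum_le_sum fun c _ => hb c
      _ = (∑ a, pOf P f a) * (∑ b, pOf P g b) := by
          rw [Finset.sum_mul_sum, Fintype.sum_prod_type]
      _ = 1 := by rw [sum_pOf, sum_pOf, h1, one_mul]

lemma ent_strong_subadd (P : Ω → ℝ) (h0 : ∀ ω, 0 ≤ P ω) (h1 : ∑ ω, P ω = 1)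
    (f : Ω → A) (g : Ω → B) (h : Ω → C) :
    ent P g + ent P (fun ω => (f ω, (g ω, h ω)))
      ≤ ent P (fun ω => (f ω, g ω)) + ent P (fun ω => (g ω, h ω)) := by
  have hpos : ∀ ω, P ω ≠ 0 → 0 < P ω := fun ω hh => (h0 ω).lt_of_ne (Ne.symm hh)
  set F : Ω → A × (B × C) := fun ω => (f ω, (g ω, h ω)) with hF
  set pfg := pOf P (fun ω => (f ω, g ω)) with hpfg
  set pgh := pOf P (fun ω => (g ω, h ω)) with hpgh
  set pg := pOf P g with hpg
  set pF := pOf P F with hpF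
  have hfgpos : ∀ ω, P ω ≠ 0 → 0 < pfg (f ω, g ω) :=
    fun ω hh => (hpos ω hh).trans_le (le_pOf P h0 _ ω)
  have hghpos : ∀ ω, P ω ≠ 0 → 0 < pgh (g ω, h ω) :=
    fun ω hh => (hpos ω hh).trans_le (le_pOf P h0 _ ω)
  have hgpos : ∀ ω, P ω ≠ 0 → 0 < pg (g ω) :=
    fun ω hh => (hpos ω hh).trans_le (le_pOf P h0 _ ω)
  have hFpos : ∀ ω, P ω ≠ 0 → 0 < pF (F ω) :=
    fun ω hh => (hpos ω hh).trans_le (le_pOf P h0 _ ω)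
  have hgib := gibbs P h0 h1 (fun ω => pfg (f ω, g ω) * pgh (g ω, h ω) / pg (g ω))
    (fun ω => pF (F ω))
    (fun ω hh => div_pos (mul_pos (hfgpos ω hh) (hghpos ω hh)) (hgpos ω hh))
    hFpos ?_
  · have hsplit : ∑ ω, P ω * Real.log (pfg (f ω, g ω) * pgh (g ω, h ω) / pg (g ω))
        = ∑ ω, P ω * Real.log (pfg (f ω, g ω)) + ∑ ω, P ω * Real.log (pgh (g ω, h ω))
          - ∑ ω, P ω * Real.log (pg (g ω)) := by
      rw [← Finset.sum_add_distrib, ← Finset.sum_sub_distrib]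
      refine Finset.sum_congr rfl fun ω _ => ?_
      rcases eq_or_ne (P ω) 0 with hh | hh
      · simp [hh]
      · rw [Real.log_div (mul_pos (hfgpos ω hh) (hghpos ω hh)).ne' (hgpos ω hh).ne',
          Real.log_mul (hfgpos ω hh).ne' (hghpos ω hh).ne']
        ring
    rw [hsplit] at hgib
    have e1 : ent P (fun ω => (f ω, g ω)) = -(∑ ω, P ω * Real.log (pfg (f ω, g ω))) / Real.log 2 :=
      ent_eq_log P _
    have e2 : ent P (fun ω => (g ω, h ω)) = -(∑ ω, P ω * Real.log (pgh (g ω, h ω))) / Real.log 2 :=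
      ent_eq_log P _
    have e3 : ent P g = -(∑ ω, P ω * Real.log (pg (g ω))) / Real.log 2 := ent_eq_log P g
    have e4 : ent P F = -(∑ ω, P ω * Real.log (pF (F ω))) / Real.log 2 := ent_eq_log P F
    rw [e1, e2, e3, e4, ← add_div, ← add_div, ← neg_add, ← neg_add]
    refine (div_le_div_iff_of_pos_right (Real.log_pos one_lt_two)).mpr (neg_le_neg ?_)
    linarith
  · have he : ∑ ω, P ω * (pfg (f ω, g ω) * pgh (g ω, h ω) / pg (g ω) / pF (F ω))
        = ∑ d : A × (B × C), pF d *
            (pfg (d.1, d.2.1) * pgh (d.2.1, d.2.2) / pg d.2.1 / pF d) := by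
      rw [pOf_expect P F (fun d => pfg (d.1, d.2.1) * pgh (d.2.1, d.2.2) / pg d.2.1 / pF d)]
    have he2 : ∀ ω, P ω * (pfg (f ω, g ω) * pgh (g ω, h ω) / pg (g ω) / pF (F ω))
        = P ω * (pfg (f ω, g ω) * pgh (g ω, h ω) / pg (g ω) / pF (F ω)) := fun _ => rfl
    calc ∑ ω, P ω * (pfg (f ω, g ω) * pgh (g ω, h ω) / pg (g ω) / pF (F ω))
        = ∑ d : A × (B × C), pF d *
            (pfg (d.1, d.2.1) * pgh (d.2.1, d.2.2) / pg d.2.1 / pF d) := he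
      _ ≤ ∑ d : A × (B × C), pfg (d.1, d.2.1) * pgh (d.2.1, d.2.2) / pg d.2.1 := by
          refine Finset.sum_le_sum fun d _ => ?_
          rcases eq_or_ne (pF d) 0 with hh | hh
          · rw [hh, zero_mul]
            have h0fg := pOf_nonneg P h0 (fun ω => (f ω, g ω)) (d.1, d.2.1)
            have h0gh := pOf_nonneg P h0 (fun ω => (g ω, h ω)) (d.2.1, d.2.2)
            have h0g := pOf_nonneg P h0 g d.2.1
            positivity
          · rw [mul_comm, div_mul_cancel₀ _ hh]
      _ = ∑ b : B, (∑ a : A, pfg (a, b)) * (∑ c : C, pgh (b, c)) / pg b := by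
          have hre : ∀ b : B, (∑ a, pfg (a, b)) * (∑ c, pgh (b, c)) / pg b
              = ∑ a, ∑ c, pfg (a, b) * pgh (b, c) / pg b := by
            intro b
            rw [Finset.sum_mul_sum, Finset.sum_div]
            exact Finset.sum_congr rfl fun a _ => (Finset.sum_div _ _ _)
          simp_rw [hre]
          rw [Fintype.sum_prod_type]
          simp_rw [Fintype.sum_prod_type]
          exact Finset.sum_comm
      _ ≤ ∑ b : B, pg b := by
          refine Finset.sum_le_sum fun b _ => ?_
          rw [pOf_pair_marg_snd, pOf_pair_marg_fst]
          rcases eq_or_ne (pg b) 0 with hh | hh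
          · rw [hh]; simp
          · rw [mul_div_assoc, div_self hh, mul_one]
      _ = 1 := by rw [sum_pOf, h1]

lemma mi_mono (P : Ω → ℝ) (h0 : ∀ ω, 0 ≤ P ω) (h1 : ∑ ω, P ω = 1)
    (f : Ω → A) (g : Ω → B) (h : Ω → C) :
    mi P f g ≤ mi P f (fun ω => (g ω, h ω)) := by
  have hs := ent_strong_subadd P h0 h1 f g h
  unfold mi
  linarith

lemma mi_upper (P : Ω → ℝ) (h0 : ∀ ω, 0 ≤ P ω) (h1 : ∑ ω, P ω = 1)
    (f : Ω → A) (g : Ω → B) (h : Ω → C) :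
    mi P f (fun ω => (g ω, h ω)) ≤ mi P f g + Real.logb 2 (Fintype.card C) := by
  have h5 : ent P (fun ω => (g ω, h ω)) ≤ ent P g + ent P h := ent_pair_le P h0 h1 g h
  have h7 : ent P h ≤ Real.logb 2 (Fintype.card C) := ent_le_logb_card P h0 h1 h
  have h4 : ent P (fun ω => (f ω, g ω)) ≤ ent P (fun ω => (f ω, (g ω, h ω))) :=
    ent_comp_le P h0 (fun ω => (f ω, (g ω, h ω))) (fun d => (d.1, d.2.1))
  unfold mi
  linarith

lemma mi_congr {Ω' : Type*} [Fintype Ω'] (P : Ω → ℝ) (Q : Ω' → ℝ)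
    (f : Ω → A) (f' : Ω' → A) (g : Ω → B) (g' : Ω' → B)
    (hp : ∀ c : A × B, pOf P (fun ω => (f ω, g ω)) c = pOf Q (fun ω => (f' ω, g' ω)) c) :
    mi P f g = mi Q f' g' := by
  have hf : ∀ a, pOf P f a = pOf Q f' a := by
    intro a
    rw [← pOf_pair_marg_fst P f g a, ← pOf_pair_marg_fst Q f' g' a]
    exact Finset.sum_congr rfl fun b _ => hp (a, b)
  have hg : ∀ b, pOf P g b = pOf Q g' b := by
    intro b
    rw [← pOf_pair_marg_snd P f g b, ← pOf_pair_marg_snd Q f' g' b]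
    exact Finset.sum_congr rfl fun a _ => hp (a, b)
  unfold mi
  rw [ent_congr P Q f f' hf, ent_congr P Q g g' hg, ent_congr P Q _ _ hp]

lemma mi_comp_equiv (P : Ω → ℝ) (h0 : ∀ ω, 0 ≤ P ω) (f : Ω → A) (g : Ω → B) (e : B ≃ C) :
    mi P f (fun ω => e (g ω)) = mi P f g := by
  unfold mi
  rw [ent_comp_equiv P h0 g e]
  congr 1
  exact ent_comp_equiv P h0 (fun ω => (f ω, g ω)) (Equiv.prodCongr (Equiv.refl A) e)

end General

section Chan
variable {Msg S X Z : Type*} [Fintype Msg] [Fintype S] [Fintype X] [Fintype Z] {n : ℕ}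

lemma sum_fn_prod {ι W : Type*} [DecidableEq ι] [Fintype ι] [Fintype W] (f : ι → W → ℝ) :
    ∑ z : ι → W, ∏ i, f i (z i) = ∏ i, ∑ w, f i w := by
  rw [Finset.prod_univ_sum]
  rw [Fintype.piFinset_univ]

lemma chan_sum (PMX : Msg → (Fin n → X) → ℝ) (h1 : ∑ m, ∑ x, PMX m x = 1)
    (Vch : S → X → Z → ℝ) (hV1 : ∀ s x, ∑ z, Vch s x z = 1) (s : Fin n → S) :
    ∑ ω : Msg × (Fin n → X) × (Fin n → Z),
      PMX ω.1 ω.2.1 * ∏ i, Vch (s i) (ω.2.1 i) (ω.2.2 i) = 1 := by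
  rw [Fintype.sum_prod_type]
  have : ∀ m : Msg, (∑ p : (Fin n → X) × (Fin n → Z),
      PMX m p.1 * ∏ i, Vch (s i) (p.1 i) (p.2 i)) = ∑ x, PMX m x := by
    intro m
    rw [Fintype.sum_prod_type]
    refine Finset.sum_congr rfl fun x _ => ?_
    dsimp only
    rw [← Finset.mul_sum, sum_fn_prod (fun i w => Vch (s i) (x i) w)]
    simp [hV1]
  simp_rw [this]
  exact h1

lemma pOf_MG (PMX : Msg → (Fin n → X) → ℝ)
    (Vch : S → X → Z → ℝ) (hV1 : ∀ s x, ∑ z, Vch s x z = 1)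
    (s : Fin n → S) (pr : Fin n → Prop) (m : Msg) (g : {i // pr i} → Z) :
    pOf (fun ω : Msg × (Fin n → X) × (Fin n → Z) =>
        PMX ω.1 ω.2.1 * ∏ i, Vch (s i) (ω.2.1 i) (ω.2.2 i))
      (fun ω => (ω.1, fun i : {i // pr i} => ω.2.2 i.1)) (m, g)
    = ∑ x : Fin n → X, PMX m x * ∏ i : {i // pr i}, Vch (s i.1) (x i.1) (g i) := by
  unfold pOf
  rw [Finset.sum_filter, Fintype.sum_prod_type]
  have step1 : ∀ m' : Msg, (∑ p : (Fin n → X) × (Fin n → Z),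
      if ((m', p).1, fun i : {i // pr i} => (m', p).2.2 i.1) = (m, g) then
        PMX (m', p).1 (m', p).2.1 * ∏ i, Vch (s i) ((m', p).2.1 i) ((m', p).2.2 i) else 0)
      = if m' = m then (∑ p : (Fin n → X) × (Fin n → Z),
          if (fun i : {i // pr i} => p.2 i.1) = g then
            PMX m p.1 * ∏ i, Vch (s i) (p.1 i) (p.2 i) else 0) else 0 := by
    intro m'
    rcases eq_or_ne m' m with h | h
    · subst h
      rw [if_pos rfl]
      refine Finset.sum_congr rfl fun p _ => ?_
      simp [Prod.ext_iff]
    · simp [Prod.ext_iff, h]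
  simp_rw [step1]
  rw [Finset.sum_ite_eq' Finset.univ m]
  simp only [Finset.mem_univ, if_pos]
  rw [Fintype.sum_prod_type]
  refine Finset.sum_congr rfl fun x _ => ?_
  -- inner sum over z
  have inner : ∑ z : Fin n → Z,
      (if (fun i : {i // pr i} => z i.1) = g then
        PMX m x * ∏ i, Vch (s i) (x i) (z i) else 0)
      = PMX m x * ∏ i : {i // pr i}, Vch (s i.1) (x i.1) (g i) := by
    set e := Equiv.piEquivPiSubtypeProd pr (fun _ => Z) with he
    rw [← Equiv.sum_comp e.symm]
    rw [Fintype.sum_prod_type]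
    have hrest : ∀ (u : {i // pr i} → Z) (v : {i // ¬ pr i} → Z),
        (fun i : {i // pr i} => (e.symm (u, v)) i.1) = u := by
      intro u v
      funext i
      simp [he, Equiv.piEquivPiSubtypeProd_symm_apply, i.2]
    have hprod : ∀ (u : {i // pr i} → Z) (v : {i // ¬ pr i} → Z),
        (∏ i, Vch (s i) (x i) ((e.symm (u, v)) i))
        = (∏ i : {i // pr i}, Vch (s i.1) (x i.1) (u i))
          * ∏ i : {i // ¬ pr i}, Vch (s i.1) (x i.1) (v i) := by
      intro u v
      rw [← Fintype.prod_subtype_mul_prod_subtype pr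
        (fun i => Vch (s i) (x i) ((e.symm (u, v)) i))]
      congr 1
      · exact Finset.prod_congr rfl fun i _ => by
          simp [he, Equiv.piEquivPiSubtypeProd_symm_apply, i.2]
      · exact Finset.prod_congr rfl fun i _ => by
          simp [he, Equiv.piEquivPiSubtypeProd_symm_apply, i.2]
    have step2 : ∀ u : {i // pr i} → Z, (∑ v : {i // ¬ pr i} → Z,
        if (fun i : {i // pr i} => (e.symm (u, v)) i.1) = g then
          PMX m x * ∏ i, Vch (s i) (x i) ((e.symm (u, v)) i) else 0)
        = if u = g then PMX m x * ((∏ i : {i // pr i}, Vch (s i.1) (x i.1) (u i))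
            * ∑ v : {i // ¬ pr i} → Z, ∏ i : {i // ¬ pr i}, Vch (s i.1) (x i.1) (v i)) else 0 := by
      intro u
      rcases eq_or_ne u g with h | h
      · subst h
        rw [if_pos rfl, Finset.mul_sum, Finset.mul_sum]
        refine Finset.sum_congr rfl fun v _ => ?_
        rw [hrest u v, if_pos rfl, hprod u v]
      · rw [if_neg h]
        refine Finset.sum_eq_zero fun v _ => ?_
        rw [hrest u v, if_neg h]
    simp_rw [step2]
    rw [Finset.sum_ite_eq' Finset.univ g]
    simp only [Finset.mem_univ, if_pos]
    have : ∑ v : {i // ¬ pr i} → Z, ∏ i : {i // ¬ pr i}, Vch (s i.1) (x i.1) (v i) = 1 := by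
      rw [sum_fn_prod (fun (i : {i // ¬ pr i}) w => Vch (s i.1) (x i.1) w)]
      simp [hV1]
    rw [this, mul_one]
  exact inner

end Chan

/-- Leakage continuity under state-sequence perturbation: if `d_H(s₁,s₂) ≤ nα` then the
leakages `I(M;Z^n|S^n=s₁)` and `I(M;Z^n|S^n=s₂)` differ by at most `nα log|Z|`. -/
theorem leakage_continuity (Msg S X Z : Type) [Fintype Msg] [Fintype S] [Fintype X]
    [Fintype Z] (n : ℕ) (α : ℝ)
    (PMX : Msg → (Fin n → X) → ℝ) (h0 : ∀ m x, 0 ≤ PMX m x) (h1 : ∑ m, ∑ x, PMX m x = 1)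
    (Vch : S → X → Z → ℝ) (hV0 : ∀ s x z, 0 ≤ Vch s x z) (hV1 : ∀ s x, ∑ z, Vch s x z = 1)
    (s₁ s₂ : Fin n → S)
    (hH : ((Finset.univ.filter fun i => s₁ i ≠ s₂ i).card : ℝ) ≤ n * α) :
    |mi (fun ω : Msg × (Fin n → X) × (Fin n → Z) =>
          PMX ω.1 ω.2.1 * ∏ i, Vch (s₁ i) (ω.2.1 i) (ω.2.2 i))
        (fun ω => ω.1) (fun ω => ω.2.2)
      - mi (fun ω : Msg × (Fin n → X) × (Fin n → Z) =>
          PMX ω.1 ω.2.1 * ∏ i, Vch (s₂ i) (ω.2.1 i) (ω.2.2 i))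
        (fun ω => ω.1) (fun ω => ω.2.2)|
      ≤ n * α * Real.logb 2 (Fintype.card Z) := by
  rcases isEmpty_or_nonempty Z with hZ | hZ
  · rcases Nat.eq_zero_or_pos n with hn | hn
    · subst hn
      have hs : s₁ = s₂ := funext fun i => i.elim0
      rw [hs, sub_self, abs_zero]
      simp
    · haveI : IsEmpty (Fin n → Z) := ⟨fun z => (hZ.false (z ⟨0, hn⟩))⟩
      haveI : IsEmpty (Msg × (Fin n → X) × (Fin n → Z)) := by infer_instance
      have hcz : Fintype.card Z = 0 := Fintype.card_eq_zero
      have hm : ∀ (P : Msg × (Fin n → X) × (Fin n → Z) → ℝ),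
          mi P (fun ω => ω.1) (fun ω => ω.2.2) = 0 := by
        intro P
        unfold mi ent pOf
        simp
      rw [hm, hm, sub_self, abs_zero, hcz]
      simp
  · -- main case
    set P₁ : Msg × (Fin n → X) × (Fin n → Z) → ℝ :=
      fun ω => PMX ω.1 ω.2.1 * ∏ i, Vch (s₁ i) (ω.2.1 i) (ω.2.2 i) with hP₁
    set P₂ : Msg × (Fin n → X) × (Fin n → Z) → ℝ :=
      fun ω => PMX ω.1 ω.2.1 * ∏ i, Vch (s₂ i) (ω.2.1 i) (ω.2.2 i) with hP₂
    have h01 : ∀ ω, 0 ≤ P₁ ω :=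
      fun ω => mul_nonneg (h0 _ _) (Finset.prod_nonneg fun i _ => hV0 _ _ _)
    have h02 : ∀ ω, 0 ≤ P₂ ω :=
      fun ω => mul_nonneg (h0 _ _) (Finset.prod_nonneg fun i _ => hV0 _ _ _)
    have h11 : ∑ ω, P₁ ω = 1 := chan_sum PMX h1 Vch hV1 s₁
    have h12 : ∑ ω, P₂ ω = 1 := chan_sum PMX h1 Vch hV1 s₂
    -- split Z^n into agreeing and disagreeing coordinates
    have split1 : mi P₁ (fun ω => ω.1) (fun ω => ω.2.2)
        = mi P₁ (fun ω => ω.1) (fun ω =>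
            ((fun i : {i // s₁ i = s₂ i} => ω.2.2 i.1),
             (fun i : {i // ¬ s₁ i = s₂ i} => ω.2.2 i.1))) :=
      (mi_comp_equiv P₁ h01 (fun ω => ω.1) (fun ω => ω.2.2)
        (Equiv.piEquivPiSubtypeProd (fun i => s₁ i = s₂ i) (fun _ => Z))).symm
    have split2 : mi P₂ (fun ω => ω.1) (fun ω => ω.2.2)
        = mi P₂ (fun ω => ω.1) (fun ω =>
            ((fun i : {i // s₁ i = s₂ i} => ω.2.2 i.1),
             (fun i : {i // ¬ s₁ i = s₂ i} => ω.2.2 i.1))) :=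
      (mi_comp_equiv P₂ h02 (fun ω => ω.1) (fun ω => ω.2.2)
        (Equiv.piEquivPiSubtypeProd (fun i => s₁ i = s₂ i) (fun _ => Z))).symm
    -- the leakage through agreeing coordinates is identical
    have hcommon : mi P₁ (fun ω => ω.1) (fun ω => (fun i : {i // s₁ i = s₂ i} => ω.2.2 i.1))
        = mi P₂ (fun ω => ω.1) (fun ω => (fun i : {i // s₁ i = s₂ i} => ω.2.2 i.1)) := by
      refine mi_congr _ _ _ _ _ _ ?_
      rintro ⟨m, g⟩
      rw [hP₁, hP₂, pOf_MG PMX Vch hV1 s₁ (fun i => s₁ i = s₂ i) m g,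
        pOf_MG PMX Vch hV1 s₂ (fun i => s₁ i = s₂ i) m g]
      refine Finset.sum_congr rfl fun x _ => ?_
      congr 1
      refine Finset.prod_congr rfl fun i _ => ?_
      rw [i.2]
    -- bounds for each state sequence
    have bd1l : mi P₁ (fun ω => ω.1) (fun ω => (fun i : {i // s₁ i = s₂ i} => ω.2.2 i.1))
        ≤ mi P₁ (fun ω => ω.1) (fun ω =>
            ((fun i : {i // s₁ i = s₂ i} => ω.2.2 i.1),
             (fun i : {i // ¬ s₁ i = s₂ i} => ω.2.2 i.1))) :=
      mi_mono P₁ h01 h11 _ _ _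
    have bd2l : mi P₂ (fun ω => ω.1) (fun ω => (fun i : {i // s₁ i = s₂ i} => ω.2.2 i.1))
        ≤ mi P₂ (fun ω => ω.1) (fun ω =>
            ((fun i : {i // s₁ i = s₂ i} => ω.2.2 i.1),
             (fun i : {i // ¬ s₁ i = s₂ i} => ω.2.2 i.1))) :=
      mi_mono P₂ h02 h12 _ _ _
    have bd1u : mi P₁ (fun ω => ω.1) (fun ω =>
            ((fun i : {i // s₁ i = s₂ i} => ω.2.2 i.1),
             (fun i : {i // ¬ s₁ i = s₂ i} => ω.2.2 i.1)))
        ≤ mi P₁ (fun ω => ω.1) (fun ω => (fun i : {i // s₁ i = s₂ i} => ω.2.2 i.1))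
          + Real.logb 2 (Fintype.card ({i // ¬ s₁ i = s₂ i} → Z)) :=
      mi_upper P₁ h01 h11 _ _ _
    have bd2u : mi P₂ (fun ω => ω.1) (fun ω =>
            ((fun i : {i // s₁ i = s₂ i} => ω.2.2 i.1),
             (fun i : {i // ¬ s₁ i = s₂ i} => ω.2.2 i.1)))
        ≤ mi P₂ (fun ω => ω.1) (fun ω => (fun i : {i // s₁ i = s₂ i} => ω.2.2 i.1))
          + Real.logb 2 (Fintype.card ({i // ¬ s₁ i = s₂ i} → Z)) :=
      mi_upper P₂ h02 h12 _ _ _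
    -- bounding the entropy of the disagreeing coordinates
    have hlogZ : 0 ≤ Real.logb 2 (Fintype.card Z) :=
      Real.logb_nonneg one_lt_two (by exact_mod_cast Fintype.card_pos)
    have hcl : Real.logb 2 (Fintype.card ({i // ¬ s₁ i = s₂ i} → Z))
        = ((Finset.univ.filter fun i => s₁ i ≠ s₂ i).card : ℝ) * Real.logb 2 (Fintype.card Z) := by
      rw [Fintype.card_fun]
      push_cast
      rw [Real.logb_pow]
      congr 2
      rw [Fintype.card_subtype]
    have hBB : Real.logb 2 (Fintype.card ({i // ¬ s₁ i = s₂ i} → Z))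
        ≤ (n : ℝ) * α * Real.logb 2 (Fintype.card Z) := by
      rw [hcl]
      exact mul_le_mul_of_nonneg_right hH hlogZ
    rw [split1, split2]
    rw [abs_le]
    constructor <;> linarith
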